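/- Let H₁, H₁′, Hₐ, Hₐ′, H₂, H₂′ be subspaces of E satisfying the transpose interval relations Hₐ′ = H₁′⊔Hₐ, H₁ = H₁′⊓Hₐ, H₂′ = Hₐ′⊔H₂, and Hₐ = Hₐ′⊓H₂ (i.e. [H₁,H₁′] ≺ₜᵣ [Hₐ,Hₐ′] ≺ₜᵣ [H₂,H₂′]). Then 𝔇(H₁′,Hₐ) + 𝔇(Hₐ′,H₂) = 𝔇(H₁′,H₂). -/

import Mathlib

variable {E : Type*} [NormedAddCommGroup E] [InnerProductSpace ℂ E] [FiniteDimensional ℂ E]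

/-- The orthogonal projection onto a subspace `K`, regarded as an operator on `E`. -/
noncomputable def proj (K : Submodule ℂ E) : E →L[ℂ] E :=
  K.subtypeL.comp (Submodule.orthogonalProjectionOnto K)

/-- The Möbius (non-additivity) operator `𝔇(H₁,H₂)`. -/
noncomputable def MobD (H₁ H₂ : Submodule ℂ E) : E →L[ℂ] E :=
  proj (H₁ ⊔ H₂) + proj (H₁ ⊓ H₂) - proj H₁ - proj H₂


theorem mobD_add_mobD_of_transpose (H₁ H₁' Ha Ha' H₂ H₂' : Submodule ℂ E)
    (h1 : Ha' = H₁' ⊔ Ha) (h2 : H₁ = H₁' ⊓ Ha)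
    (h3 : H₂' = Ha' ⊔ H₂) (h4 : Ha = Ha' ⊓ H₂) :
    MobD H₁' Ha + MobD Ha' H₂ = MobD H₁' H₂ := by
  have ha_le : Ha ≤ H₂ := h4 ▸ inf_le_right
  have h1'_le : H₁' ≤ Ha' := h1 ▸ le_sup_left
  have e_sup3 : H₁' ⊔ H₂ = H₂' := by
    rw [h3, h1, sup_assoc, sup_eq_right.mpr ha_le]
  have e_inf3 : H₁' ⊓ H₂ = H₁ := by
    refine le_antisymm ?_ ?_
    · rw [h2]
      exact le_inf inf_le_left (h4 ▸ le_inf (le_trans inf_le_left h1'_le) inf_le_right)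
    · rw [h2]
      exact le_inf inf_le_left (le_trans inf_le_right ha_le)
  unfold MobD
  rw [← h1, ← h2, ← h3, ← h4, e_sup3, e_inf3]
  abel
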